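/- arXiv:1807.06922 — 2 statements merged into one kernel-verified Lean document; each statement's English description precedes it below -/
import Mathlib

section
/- Let (A_n, d_i, s_i) be a simplicial abelian group with a compatible symmetric structure: each A_n carries an S_{n+1}-action generated by involutions t_i satisfying the mixed relations d_j t_i = t_i d_j (i < j−1), d_i t_i = d_{i+1}, d_j t_i = t_{i−1} d_j (i > j), and t_i s_i = s_i. Then the subgroup B_n = ⟨α(a) − sgn(α)·a : a ∈ A_n, α ∈ S_{n+1}⟩ is preserved by the boundary ∂ = Σ(−1)^i d_i, i.e., ∂(B_n) ⊆ B_{n−1}. -/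
set_option maxHeartbeats 1600000 in
/-- Let `(A_n, d_i, s_i)` be a simplicial abelian group carrying a compatible symmetric
structure: each `A_n` has an `S_{n+1}`-action `g` by automorphisms whose adjacent
transpositions `t_i` satisfy the mixed relations
`d_j t_i = t_i d_j` (for `i < j−1`), `d_i t_i = d_{i+1}`, `d_j t_i = t_{i−1} d_j` (for `i > j`)
and `t_i s_i = s_i`.  Then the subgroup
`B_n = ⟨α(a) − sgn(α)·a⟩` is preserved by the boundary `∂ = Σ (−1)^i d_i`. -/
theorem boundary_preserves_sign_relations
    (A : ℕ → Type*) [∀ n, AddCommGroup (A n)]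
    (d : ∀ m : ℕ, ℕ → (A (m + 1) →+ A m))
    (s : ∀ m : ℕ, ℕ → (A m →+ A (m + 1)))
    (g : ∀ m : ℕ, Equiv.Perm (Fin (m + 1)) → (A m →+ A m))
    -- `g` is an action by automorphisms
    (hone : ∀ m, g m 1 = AddMonoidHom.id (A m))
    (hmul : ∀ m (α β : Equiv.Perm (Fin (m + 1))), g m (α * β) = (g m α).comp (g m β))
    -- mixed relation: d_j t_i = t_i d_j for i < j − 1
    (hmix₁ : ∀ (m i j : ℕ) (h₁ : i + 1 < j) (h₂ : j ≤ m + 1),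
      (d m j).comp (g (m + 1) (Equiv.swap ⟨i, by omega⟩ ⟨i + 1, by omega⟩))
        = (g m (Equiv.swap ⟨i, by omega⟩ ⟨i + 1, by omega⟩)).comp (d m j))
    -- mixed relation: d_i t_i = d_{i+1}
    (hmix₂ : ∀ (m i : ℕ) (h : i + 1 ≤ m + 1),
      (d m i).comp (g (m + 1) (Equiv.swap ⟨i, by omega⟩ ⟨i + 1, by omega⟩)) = d m (i + 1))
    -- mixed relation: d_j t_i = t_{i−1} d_j for i > j
    (hmix₃ : ∀ (m i j : ℕ) (h₁ : j < i) (h₂ : i + 1 ≤ m + 1),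
      (d m j).comp (g (m + 1) (Equiv.swap ⟨i, by omega⟩ ⟨i + 1, by omega⟩))
        = (g m (Equiv.swap ⟨i - 1, by omega⟩ ⟨i, by omega⟩)).comp (d m j))
    -- mixed relation: t_i s_i = s_i
    (hmix₄ : ∀ (m i : ℕ) (h : i ≤ m),
      (g (m + 1) (Equiv.swap ⟨i, by omega⟩ ⟨i + 1, by omega⟩)).comp (s m i) = s m i) :
    ∀ (m : ℕ) (x : A (m + 1)),
      x ∈ AddSubgroup.closure {b : A (m + 1) | ∃ (a : A (m + 1)) (α : Equiv.Perm (Fin (m + 2))),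
            b = g (m + 1) α a - ((Equiv.Perm.sign α : ℤ)) • a} →
      (∑ i ∈ Finset.range (m + 2), ((-1 : ℤ) ^ i) • d m i) x
        ∈ AddSubgroup.closure {b : A m | ∃ (a : A m) (α : Equiv.Perm (Fin (m + 1))),
            b = g m α a - ((Equiv.Perm.sign α : ℤ)) • a} := by
  intro m x hx
  set Bm := AddSubgroup.closure {b : A m | ∃ (a : A m) (α : Equiv.Perm (Fin (m + 1))),
      b = g m α a - ((Equiv.Perm.sign α : ℤ)) • a} with hBm
  set D : A (m + 1) →+ A m := ∑ i ∈ Finset.range (m + 2), ((-1 : ℤ) ^ i) • d m i with hD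
  have hgen : ∀ (α : Equiv.Perm (Fin (m + 1))) (a : A m),
      g m α a - ((Equiv.Perm.sign α : ℤ)) • a ∈ Bm :=
    fun α a => AddSubgroup.subset_closure ⟨a, α, rfl⟩
  -- membership of `t x + x` in `Bm` for adjacent transpositions in `S_{m+1}`
  have hswapmem : ∀ (k : ℕ) (hk : k + 1 < m + 1) (b : A m),
      g m (Equiv.swap ⟨k, by omega⟩ ⟨k + 1, by omega⟩) b + b ∈ Bm := by
    intro k hk b
    have hne : (⟨k, by omega⟩ : Fin (m + 1)) ≠ ⟨k + 1, by omega⟩ := by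
      simp [Fin.ext_iff]
    have hs := hgen (Equiv.swap ⟨k, by omega⟩ ⟨k + 1, by omega⟩) b
    rwa [Equiv.Perm.sign_swap hne, Units.val_neg, Units.val_one, neg_smul, one_smul,
      sub_neg_eq_add] at hs
  -- the key claim, for every permutation
  have key : ∀ (α : Equiv.Perm (Fin (m + 2))) (a : A (m + 1)),
      D (g (m + 1) α a) - ((Equiv.Perm.sign α : ℤ)) • D a ∈ Bm := by
    have hsub : (Set.range fun i : Fin (m + 1) ↦ Equiv.swap i.castSucc i.succ) ⊆
        {α : Equiv.Perm (Fin (m + 2)) | ∀ a : A (m + 1),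
          D (g (m + 1) α a) - ((Equiv.Perm.sign α : ℤ)) • D a ∈ Bm} := by
      rintro _ ⟨i, rfl⟩ a
      have hi : (i : ℕ) + 1 < m + 2 := by omega
      have hcs : (Fin.castSucc i) = (⟨(i : ℕ), by omega⟩ : Fin (m + 2)) := rfl
      have hsc : (Fin.succ i) = (⟨(i : ℕ) + 1, by omega⟩ : Fin (m + 2)) := rfl
      simp only [hcs, hsc]
      set t := g (m + 1) (Equiv.swap (⟨(i : ℕ), by omega⟩ : Fin (m + 2)) ⟨(i : ℕ) + 1, by omega⟩)
        with ht
      have hne : ((⟨(i : ℕ), by omega⟩ : Fin (m + 2))) ≠ ⟨(i : ℕ) + 1, by omega⟩ := by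
        simp [Fin.ext_iff]
      rw [Equiv.Perm.sign_swap hne, Units.val_neg, Units.val_one, neg_smul, one_smul,
        sub_neg_eq_add]
      -- d_{i+1} t_i = d_i
      have htt : t.comp t = AddMonoidHom.id _ := by
        rw [ht, ← hmul, Equiv.swap_mul_self, hone]
      have h2 : (d m (i : ℕ)).comp t = d m ((i : ℕ) + 1) := hmix₂ m i (by omega)
      have h2' : (d m ((i : ℕ) + 1)).comp t = d m (i : ℕ) := by
        calc (d m ((i : ℕ) + 1)).comp t = ((d m (i : ℕ)).comp t).comp t := by rw [h2]
        _ = (d m (i : ℕ)).comp (t.comp t) := by rw [AddMonoidHom.comp_assoc]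
        _ = d m (i : ℕ) := by rw [htt, AddMonoidHom.comp_id]
      -- rewrite the sum
      have happ : ∀ y : A (m + 1), D y = ∑ j ∈ Finset.range (m + 2), ((-1 : ℤ) ^ j) • d m j y := by
        intro y
        rw [hD, AddMonoidHom.finset_sum_apply]
        simp
      rw [happ, happ, ← Finset.sum_add_distrib]
      set f : ℕ → A m := fun j => ((-1 : ℤ) ^ j) • d m j (t a) + ((-1 : ℤ) ^ j) • d m j a with hf
      have hmem1 : (i : ℕ) + 1 ∈ Finset.range (m + 2) := Finset.mem_range.2 (by omega)
      have hmem2 : (i : ℕ) ∈ (Finset.range (m + 2)).erase ((i : ℕ) + 1) :=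
        Finset.mem_erase.2 ⟨by omega, Finset.mem_range.2 (by omega)⟩
      rw [← Finset.sum_erase_add _ f hmem1, ← Finset.sum_erase_add _ f hmem2]
      have hcancel : f (i : ℕ) + f ((i : ℕ) + 1) = 0 := by
        have e1 : d m (i : ℕ) (t a) = d m ((i : ℕ) + 1) a := by
          have := congrArg (fun φ => φ a) h2; simpa using this
        have e2 : d m ((i : ℕ) + 1) (t a) = d m (i : ℕ) a := by
          have := congrArg (fun φ => φ a) h2'; simpa using this
        rw [hf]
        simp only [e1, e2, pow_succ, mul_neg_one, neg_smul]
        abel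
      rw [add_assoc, hcancel, add_zero]
      apply AddSubgroup.sum_mem
      intro j hj
      rw [Finset.mem_erase, Finset.mem_erase, Finset.mem_range] at hj
      obtain ⟨hj1, hj2, hj3⟩ := hj
      show ((-1 : ℤ) ^ j) • d m j (t a) + ((-1 : ℤ) ^ j) • d m j a ∈ Bm
      rcases lt_or_gt_of_ne hj2 with hlt | hgt
      · -- j < i : use hmix₃
        have hlt2 : j < (i : ℕ) := by omega
        have h3 := hmix₃ m (i : ℕ) j hlt2 (by omega)
        have e3 : d m j (t a) =
            g m (Equiv.swap ⟨(i : ℕ) - 1, by omega⟩ ⟨(i : ℕ), by omega⟩) (d m j a) := by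
          have := congrArg (fun φ => φ a) h3; simpa using this
        rw [← smul_add, e3]
        apply AddSubgroup.zsmul_mem
        have hlem : ((i : ℕ) - 1) + 1 < m + 1 := by omega
        have := hswapmem ((i : ℕ) - 1) hlem (d m j a)
        have heq : ((i : ℕ) - 1) + 1 = (i : ℕ) := by omega
        convert this using 4 <;> simp [Fin.ext_iff, heq]
      · -- j > i + 1 : use hmix₁
        have hlt' : (i : ℕ) + 1 < j := by omega
        have h1 := hmix₁ m (i : ℕ) j hlt' (by omega)
        have e1 : d m j (t a) =
            g m (Equiv.swap ⟨(i : ℕ), by omega⟩ ⟨(i : ℕ) + 1, by omega⟩) (d m j a) := by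
          have := congrArg (fun φ => φ a) h1; simpa using this
        rw [← smul_add, e1]
        apply AddSubgroup.zsmul_mem
        exact hswapmem (i : ℕ) (by omega) (d m j a)
    intro α a
    have htop : α ∈ Submonoid.closure
        (Set.range fun i : Fin (m + 1) ↦ Equiv.swap i.castSucc i.succ) := by
      rw [Equiv.Perm.mclosure_swap_castSucc_succ]; trivial
    induction htop using Submonoid.closure_induction generalizing a with
    | mem β hβ => exact hsub hβ a
    | one =>
      rw [hone, map_one]
      simp only [AddMonoidHom.id_apply, Units.val_one, one_smul, sub_self]
      exact AddSubgroup.zero_mem _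
    | mul β γ _ _ hβ hγ =>
      have hcomp : g (m + 1) (β * γ) a = g (m + 1) β (g (m + 1) γ a) := by
        rw [hmul]; rfl
      have hsign : ((Equiv.Perm.sign (β * γ) : ℤ)) • D a
          = (Equiv.Perm.sign β : ℤ) • ((Equiv.Perm.sign γ : ℤ) • D a) := by
        rw [map_mul, Units.val_mul, mul_smul]
      have : D (g (m + 1) (β * γ) a) - ((Equiv.Perm.sign (β * γ) : ℤ)) • D a
          = (D (g (m + 1) β (g (m + 1) γ a))
              - (Equiv.Perm.sign β : ℤ) • D (g (m + 1) γ a))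
            + (Equiv.Perm.sign β : ℤ) •
              (D (g (m + 1) γ a) - (Equiv.Perm.sign γ : ℤ) • D a) := by
        rw [hcomp, hsign, smul_sub]; abel
      rw [this]
      exact AddSubgroup.add_mem _ (hβ _) (AddSubgroup.zsmul_mem _ (hγ _) _)
  -- conclude by closure induction
  induction hx using AddSubgroup.closure_induction with
  | mem b hb =>
    obtain ⟨a, α, rfl⟩ := hb
    rw [map_sub, map_zsmul]
    exact key α a
  | zero => rw [map_zero]; exact AddSubgroup.zero_mem _
  | add y z _ _ hy hz => rw [map_add]; exact AddSubgroup.add_mem _ hy hz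
  | neg y _ hy => rw [map_neg]; exact AddSubgroup.neg_mem _ hy
end

section
/- Let P be an extremally disconnected compact Hausdorff space. Then P is projective in the category of compact Hausdorff spaces: for any continuous f : P → A and continuous surjection g : B → A between compact Hausdorff spaces, there exists a continuous h : P → B with f = g ∘ h. -/
/-- Gleason's theorem (one direction): an extremally disconnected compact Hausdorff space `P`
is projective in the category of compact Hausdorff spaces: given a continuous map `f : P → A`
and a continuous surjection `g : B → A` of compact Hausdorff spaces, there is a continuous
lift `h : P → B` with `f = g ∘ h`. -/
theorem extremallyDisconnected_projective
    {P A B : Type*} [TopologicalSpace P] [TopologicalSpace A] [TopologicalSpace B]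
    [CompactSpace P] [T2Space P] [CompactSpace A] [T2Space A] [CompactSpace B] [T2Space B]
    [ExtremallyDisconnected P]
    (f : P → A) (hf : Continuous f)
    (g : B → A) (hg : Continuous g) (hgsurj : Function.Surjective g) :
    ∃ h : P → B, Continuous h ∧ f = g ∘ h := by
  haveI : ExtremallyDisconnected (ULift.{max u_1 u_2 u_3} P) :=
    extremallyDisconnected_of_homeo Homeomorph.ulift.symm
  obtain ⟨h, hc, hcomp⟩ := CompactT2.ExtremallyDisconnected.projective
    (A := ULift.{max u_1 u_2 u_3} P)
    (f := fun p => (ULift.up (f p.down) : ULift.{max u_1 u_2 u_3} A))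
    (g := fun b : ULift.{max u_1 u_2 u_3} B => ULift.up (g b.down))
    (continuous_uliftUp.comp (hf.comp continuous_uliftDown))
    (continuous_uliftUp.comp (hg.comp continuous_uliftDown))
    (fun a => by obtain ⟨b, hb⟩ := hgsurj a.down
                 exact ⟨ULift.up b, congrArg ULift.up hb⟩)
  exact ⟨fun p => (h (ULift.up p)).down, continuous_uliftDown.comp (hc.comp continuous_uliftUp),
    funext fun p => congrArg ULift.down (congrFun hcomp (ULift.up p)).symm⟩
end
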